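/- arXiv:1312.4429 — 2 statements merged into one kernel-verified Lean document; each statement's English description precedes it below -/
import Mathlib

section
/- The boxes of the bit-reversal construction are empty: let m, m' in {0,...,2^k−1} differ exactly in the i-th bit, with m < m'. Then for every p in {0,...,2^k−1} with m < p < m', the value y(p) does not lie strictly between y(m) and y(m'), where y is the k-bit bit-reversal map. Consequently, no point (p, y(p)) of the bit-reversal point set lies in the open box spanned by (m, y(m)) and (m', y(m')). -/
/-- The `k`-bit bit-reversal map. -/
def bitrev (k m : ℕ) : ℕ :=
  ∑ i ∈ Finset.range k, if m.testBit i then 2 ^ (k - 1 - i) else 0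

lemma testBit_div_pow (x n t : ℕ) : (x / 2 ^ n).testBit t = x.testBit (n + t) := by
  simp [Nat.testBit_eq_decide_div_mod_eq, Nat.div_div_eq_div_mul, ← pow_add]

/-- The boxes of the bit-reversal construction are empty: if `m < m'` differ exactly in the
`i`-th bit, then for every `p` with `m < p < m'`, the value `y(p)` does not lie strictly
between `y(m)` and `y(m')`; hence no point `(p, y(p))` of the bit-reversal point set lies
in the open box spanned by `(m, y(m))` and `(m', y(m'))`. -/
theorem bitrev_box_empty (k i m m' : ℕ) (hi1 : 1 ≤ i) (hik : i ≤ k)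
    (hm' : m' < 2 ^ k) (hlt : m < m') (hxor : m ^^^ m' = 2 ^ (i - 1))
    (p : ℕ) (hp : p < 2 ^ k) (h1 : m < p) (h2 : p < m') :
    ¬ (min (bitrev k m) (bitrev k m') < bitrev k p ∧
        bitrev k p < max (bitrev k m) (bitrev k m')) := by
  rintro ⟨hlo, hhi⟩
  have hjk : i - 1 < k := by omega
  -- bits of m and m' agree away from i-1
  have hbit : ∀ t, t ≠ i - 1 → m.testBit t = m'.testBit t := by
    intro t ht
    have h := congrArg (fun x => x.testBit t) hxor
    simp only [Nat.testBit_xor, Nat.testBit_two_pow] at h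
    rw [decide_eq_false (fun hh => ht hh.symm)] at h
    simpa using h
  have hbj : (m.testBit (i - 1) ^^ m'.testBit (i - 1)) = true := by
    have h := congrArg (fun x => x.testBit (i - 1)) hxor
    simpa [Nat.testBit_xor, Nat.testBit_two_pow] using h
  have hmj : m.testBit (i - 1) = false := by
    by_contra hc
    have hm : m.testBit (i - 1) = true := by simpa using hc
    have hm'f : m'.testBit (i - 1) = false := by
      cases h' : m'.testBit (i - 1)
      · rfl
      · rw [hm, h'] at hbj; simp at hbj
    have : m' < m :=
      Nat.lt_of_testBit (i - 1) hm'f hm (fun t ht => (hbit t (by omega)).symm)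
    omega
  have hm'j : m'.testBit (i - 1) = true := by
    cases h' : m'.testBit (i - 1)
    · rw [hmj, h'] at hbj; simp at hbj
    · rfl
  -- high parts agree
  have hdiv : m / 2 ^ i = m' / 2 ^ i := by
    apply Nat.eq_of_testBit_eq
    intro t
    rw [testBit_div_pow, testBit_div_pow]
    exact hbit _ (by omega)
  have hpd : p / 2 ^ i = m / 2 ^ i := by
    have ha : m / 2 ^ i ≤ p / 2 ^ i := Nat.div_le_div_right h1.le
    have hb : p / 2 ^ i ≤ m' / 2 ^ i := Nat.div_le_div_right h2.le
    omega
  have hpbit : ∀ t, i ≤ t → p.testBit t = m.testBit t := by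
    intro t ht
    have h := congrArg (fun x => Nat.testBit x (t - i)) hpd
    simp only [testBit_div_pow] at h
    rwa [Nat.add_sub_cancel' ht] at h
  -- bitrev of m' is bitrev of m plus 2^(k-i)
  have hB : bitrev k m' = bitrev k m + 2 ^ (k - i) := by
    unfold bitrev
    have hcongr : ∀ t ∈ Finset.range k,
        (if m'.testBit t then 2 ^ (k - 1 - t) else 0) =
          (if m.testBit t then 2 ^ (k - 1 - t) else 0) +
            (if t = i - 1 then 2 ^ (k - i) else 0) := by
      intro t _
      by_cases ht : t = i - 1
      · subst ht
        rw [hmj, hm'j]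
        have he : k - 1 - (i - 1) = k - i := by omega
        simp [he]
      · rw [← hbit t ht]
        simp [ht]
    rw [Finset.sum_congr rfl hcongr, Finset.sum_add_distrib]
    congr 1
    rw [Finset.sum_ite_eq' (Finset.range k)]
    simp [hjk]
  -- bitrev of p agrees with bitrev of m mod 2^(k-i)
  have hC : bitrev k p % 2 ^ (k - i) = bitrev k m % 2 ^ (k - i) := by
    unfold bitrev
    rw [Finset.sum_nat_mod, Finset.sum_nat_mod (Finset.range k) _
      (fun t => if m.testBit t then 2 ^ (k - 1 - t) else 0)]
    congr 1
    apply Finset.sum_congr rfl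
    intro t htk
    by_cases ht : i ≤ t
    · rw [hpbit t ht]
    · have hd : 2 ^ (k - i) ∣ 2 ^ (k - 1 - t) := pow_dvd_pow 2 (by omega)
      have h0 : 2 ^ (k - 1 - t) % 2 ^ (k - i) = 0 := by
        obtain ⟨c, hc⟩ := hd
        simp [hc, Nat.mul_mod_right]
      by_cases hb : p.testBit t <;> by_cases hb' : m.testBit t <;> simp [hb, hb', h0]
  -- conclude
  rw [hB] at hlo hhi
  rw [min_eq_left (Nat.le_add_right _ _)] at hlo
  rw [max_eq_right (Nat.le_add_right _ _)] at hhi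
  have hdvd : 2 ^ (k - i) ∣ bitrev k p - bitrev k m :=
    (Nat.modEq_iff_dvd' hlo.le).mp hC.symm
  have := Nat.le_of_dvd (by omega) hdvd
  omega
end

section
/- Boxes of the same size are pairwise disjoint: fix i with 1 ≤ i ≤ k, and consider the open axis-parallel boxes spanned by pairs (m, y(m)), (m', y(m')) where m XOR m' = 2^{i−1}. Then any two such open boxes arising from distinct pairs are disjoint. -/
/-- The open axis-parallel box `(x₁, x₂) × (y₁, y₂)` in the plane. -/
def openBox (x₁ x₂ y₁ y₂ : ℕ) : Set (ℝ × ℝ) :=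
  Set.Ioo (x₁ : ℝ) (x₂ : ℝ) ×ˢ Set.Ioo (y₁ : ℝ) (y₂ : ℝ)

lemma bitrev_succ (e n : ℕ) :
    bitrev (e+1) n = (if n.testBit 0 then 2^e else 0) + bitrev e (n/2) := by
  unfold bitrev
  rw [Finset.sum_range_succ']
  simp only [Nat.testBit_add_one, Nat.add_sub_cancel]
  rw [add_comm]
  congr 1
  apply Finset.sum_congr rfl
  intro t ht
  have h : e - (t+1) = e - 1 - t := by omega
  rw [h]

lemma bitrev_lt (e n : ℕ) : bitrev e n < 2 ^ e := by
  induction e generalizing n with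
  | zero => simp [bitrev]
  | succ e ih =>
    rw [bitrev_succ]
    have := ih (n / 2)
    have h2 : (2:ℕ)^(e+1) = 2^e + 2^e := by ring
    split <;> omega

lemma testBit_bitrev (e n j : ℕ) (hj : j < e) :
    (bitrev e n).testBit j = n.testBit (e - 1 - j) := by
  induction e generalizing n j with
  | zero => omega
  | succ e ih =>
    rw [bitrev_succ]
    have hlt := bitrev_lt e (n / 2)
    rcases Nat.lt_or_ge j e with hje | hje
    · have h1 : (e + 1) - 1 - j = (e - 1 - j) + 1 := by omega
      rw [h1, Nat.testBit_add_one]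
      rw [← ih (n/2) j hje]
      by_cases hb : n.testBit 0
      · simp only [hb, if_true]
        have h2 := Nat.testBit_two_pow_mul_add 1 hlt j
        rw [mul_one] at h2
        rw [h2]
        simp [hje]
      · simp [hb]
    · obtain rfl : e = j := by omega
      simp only [Nat.add_sub_cancel, Nat.sub_self]
      by_cases hb : n.testBit 0
      · rw [if_pos hb]
        have h2 := Nat.testBit_two_pow_mul_add 1 hlt e
        rw [mul_one] at h2
        rw [h2]
        simp [hb]
      · rw [if_neg hb, zero_add, Nat.testBit_lt_two_pow hlt]
        simp [hb]

lemma bitrev_injOn {e a b : ℕ} (ha : a < 2^e) (hb : b < 2^e)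
    (h : bitrev e a = bitrev e b) : a = b := by
  apply Nat.eq_of_testBit_eq
  intro i
  rcases Nat.lt_or_ge i e with hie | hie
  · have h1 := testBit_bitrev e a (e - 1 - i) (by omega)
    have h2 := testBit_bitrev e b (e - 1 - i) (by omega)
    have h3 : e - 1 - (e - 1 - i) = i := by omega
    rw [h3] at h1 h2
    rw [← h1, ← h2, h]
  · rw [Nat.testBit_lt_two_pow (lt_of_lt_of_le ha (Nat.pow_le_pow_right (by norm_num) hie)),
        Nat.testBit_lt_two_pow (lt_of_lt_of_le hb (Nat.pow_le_pow_right (by norm_num) hie))]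

lemma xor_two_pow_of_testBit_false {x e : ℕ} (h : x.testBit e = false) :
    x ^^^ 2^e = x + 2^e := by
  have hxor : x ^^^ 2^e = x ||| 2^e := by
    apply Nat.eq_of_testBit_eq
    intro j
    by_cases hj : j = e
    · subst hj; simp [h]
    · simp [Nat.testBit_two_pow_of_ne (fun he => hj he.symm)]
  have hp : (2:ℕ)^(e+1) = 2^e * 2 := pow_succ 2 e
  have hl : x % 2^(e+1) < 2^e := by
    have h1 : x % 2^(e+1) / 2^e = x / 2^e % 2 := by
      rw [pow_succ, Nat.mod_mul_right_div_self]
    have h2 : x / 2^e % 2 = 0 := by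
      have := Nat.testBit_eq_decide_div_mod_eq (x := x) (i := e)
      rw [h] at this
      simpa using this.symm
    have h3 : x % 2^(e+1) / 2^e = 0 := by rw [h1, h2]
    have h4 : (0:ℕ) < 2^e := Nat.two_pow_pos e
    rcases Nat.lt_or_ge (x % 2^(e+1)) (2^e) with h5 | h5
    · exact h5
    · exfalso; have := Nat.div_le_div_right (c := 2^e) h5
      rw [Nat.div_self h4] at this; omega
  have hx : 2^(e+1) * (x / 2^(e+1)) + x % 2^(e+1) = x := Nat.div_add_mod x (2^(e+1))
  have hL2 : x % 2^(e+1) < 2^(e+1) := Nat.mod_lt x (by positivity)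
  have hL3 : 2^e * 1 + x % 2^(e+1) < 2^(e+1) := by omega
  rw [hxor]
  calc x ||| 2^e
      = (2^(e+1) * (x / 2^(e+1)) + x % 2^(e+1)) ||| 2^e := by rw [hx]
    _ = (2^(e+1) * (x / 2^(e+1)) ||| x % 2^(e+1)) ||| 2^e := by
        rw [← Nat.two_pow_add_eq_or_of_lt hL2]
    _ = 2^(e+1) * (x / 2^(e+1)) ||| (x % 2^(e+1) ||| 2^e) := Nat.lor_assoc ..
    _ = 2^(e+1) * (x / 2^(e+1)) ||| (2^e * 1 ||| x % 2^(e+1)) := by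
        rw [Nat.lor_comm (x % 2^(e+1)), mul_one]
    _ = 2^(e+1) * (x / 2^(e+1)) ||| (2^e * 1 + x % 2^(e+1)) := by
        rw [← Nat.two_pow_add_eq_or_of_lt hl]
    _ = 2^(e+1) * (x / 2^(e+1)) + (2^e * 1 + x % 2^(e+1)) := by
        rw [← Nat.two_pow_add_eq_or_of_lt hL3]
    _ = x + 2^e := by omega

lemma bitrev_split {k e : ℕ} (hek : e < k) (m : ℕ) :
    bitrev k m = 2^(k-e) * bitrev e (m % 2^e)
      + ∑ j ∈ Finset.Ico e k, (if m.testBit j then 2 ^ (k - 1 - j) else 0) := by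
  unfold bitrev
  rw [Finset.range_eq_Ico, ← Finset.sum_Ico_consecutive _ (Nat.zero_le e) (le_of_lt hek)]
  congr 1
  rw [Finset.mul_sum, ← Finset.range_eq_Ico]
  apply Finset.sum_congr rfl
  intro j hj
  rw [Finset.mem_range] at hj
  rw [Nat.testBit_mod_two_pow]
  simp only [hj, decide_true, Bool.true_and]
  split
  · rw [← pow_add]
    congr 1
    omega
  · rw [mul_zero]

lemma bitrev_xor {k e m : ℕ} (hek : e < k) (hbit : m.testBit e = false) :
    bitrev k (m ^^^ 2^e) = bitrev k m + 2^(k-1-e) := by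
  unfold bitrev
  have key : ∀ j ∈ Finset.range k,
      (if (m ^^^ 2^e).testBit j then 2 ^ (k - 1 - j) else 0)
      = (if m.testBit j then 2 ^ (k - 1 - j) else 0) + (if j = e then 2^(k-1-e) else 0) := by
    intro j hj
    by_cases hje : j = e
    · subst hje
      simp [Nat.testBit_xor, hbit]
    · simp [Nat.testBit_xor, Nat.testBit_two_pow_of_ne (fun h => hje h.symm), hje]
  rw [Finset.sum_congr rfl key, Finset.sum_add_distrib]
  congr 1
  rw [Finset.sum_ite_eq' (Finset.range k) e]
  simp [hek]

lemma disjoint_box_x {a b c d a' b' c' d' : ℕ} (h : b ≤ a' ∨ b' ≤ a) :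
    Disjoint (openBox a b c d) (openBox a' b' c' d') := by
  rw [Set.disjoint_left]
  rintro ⟨x, y⟩ ⟨⟨hx1, hx2⟩, -⟩ ⟨⟨hx3, hx4⟩, -⟩
  rcases h with h | h
  · have : (b:ℝ) ≤ a' := by exact_mod_cast h
    linarith
  · have : (b':ℝ) ≤ a := by exact_mod_cast h
    linarith

lemma disjoint_box_y {a b c d a' b' c' d' : ℕ} (h : d ≤ c' ∨ d' ≤ c) :
    Disjoint (openBox a b c d) (openBox a' b' c' d') := by
  rw [Set.disjoint_left]
  rintro ⟨x, y⟩ ⟨-, hy1, hy2⟩ ⟨-, hy3, hy4⟩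
  rcases h with h | h
  · have : (d:ℝ) ≤ c' := by exact_mod_cast h
    linarith
  · have : (d':ℝ) ≤ c := by exact_mod_cast h
    linarith

lemma pair_structure {e m m' : ℕ} (h1 : m < m') (hx : m ^^^ m' = 2^e) :
    m.testBit e = false ∧ m' = m + 2^e := by
  have hm' : m' = m ^^^ 2^e := by
    rw [← hx, xor_cancel_left]
  by_cases hb : m.testBit e
  · exfalso
    -- then m = m' + 2^e, contradicting m < m'
    have hm : m = m' ^^^ 2^e := by
      rw [hm', Nat.xor_assoc, Nat.xor_self, Nat.xor_zero]
    have hb' : m'.testBit e = false := by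
      rw [hm', Nat.testBit_xor, hb, Nat.testBit_two_pow_self]
      rfl
    have := xor_two_pow_of_testBit_false hb'
    rw [← hm] at this
    omega
  · have hb' : m.testBit e = false := by simpa using hb
    exact ⟨hb', by rw [hm', xor_two_pow_of_testBit_false hb']⟩

/-- Boxes of the same size are pairwise disjoint: for a fixed bit position `i`, the open
boxes spanned by pairs `(m, y(m))`, `(m', y(m'))` with `m ^^^ m' = 2^(i-1)` arising from
distinct pairs are disjoint. -/
theorem same_size_boxes_disjoint (k i : ℕ) (hi1 : 1 ≤ i) (hik : i ≤ k)
    (m m' q q' : ℕ) (hm' : m' < 2 ^ k) (hq' : q' < 2 ^ k)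
    (h1 : m < m') (h2 : q < q')
    (hx1 : m ^^^ m' = 2 ^ (i - 1)) (hx2 : q ^^^ q' = 2 ^ (i - 1))
    (hne : (m, m') ≠ (q, q')) :
    Disjoint
      (openBox m m' (min (bitrev k m) (bitrev k m')) (max (bitrev k m) (bitrev k m')))
      (openBox q q' (min (bitrev k q) (bitrev k q')) (max (bitrev k q) (bitrev k q'))) := by
  set e := i - 1 with he_def
  have he : e < k := by omega
  obtain ⟨hbm, hma⟩ := pair_structure h1 hx1
  obtain ⟨hbq, hqa⟩ := pair_structure h2 hx2
  have hpos : (0:ℕ) < 2^e := Nat.two_pow_pos e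
  have hmq : m ≠ q := by
    intro h
    exact hne (by rw [Prod.mk.injEq]; exact ⟨h, by rw [hma, hqa, h]⟩)
  have dm := Nat.div_add_mod m (2^e)
  have dq := Nat.div_add_mod q (2^e)
  have dml : m % 2^e < 2^e := Nat.mod_lt m hpos
  have dql : q % 2^e < 2^e := Nat.mod_lt q hpos
  by_cases hdiv : m / 2^e = q / 2^e
  · -- same block in x, use y-disjointness
    have hdiv' : 2^e * (m / 2^e) = 2^e * (q / 2^e) := by rw [hdiv]
    have hlo : m % 2^e ≠ q % 2^e := by omega
    have hB : bitrev e (m % 2^e) ≠ bitrev e (q % 2^e) := by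
      intro h
      exact hlo (bitrev_injOn dml dql h)
    -- tails agree
    have htail : ∀ j, e ≤ j → m.testBit j = q.testBit j := by
      intro j hj
      have h1' : m.testBit j = (m / 2^e).testBit (j - e) := by
        rw [← Nat.shiftRight_eq_div_pow, Nat.testBit_shiftRight]
        congr 1; omega
      have h2' : q.testBit j = (q / 2^e).testBit (j - e) := by
        rw [← Nat.shiftRight_eq_div_pow, Nat.testBit_shiftRight]
        congr 1; omega
      rw [h1', h2', hdiv]
    have hsm := bitrev_split he m
    have hsq := bitrev_split he q
    have hCeq : (∑ j ∈ Finset.Ico e k, (if m.testBit j then 2 ^ (k - 1 - j) else 0))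
        = ∑ j ∈ Finset.Ico e k, (if q.testBit j then 2 ^ (k - 1 - j) else 0) := by
      apply Finset.sum_congr rfl
      intro j hj
      rw [Finset.mem_Ico] at hj
      rw [htail j hj.1]
    rw [hCeq] at hsm
    -- min/max identification
    have hm'eq : m' = m ^^^ 2^e := by rw [← hx1, xor_cancel_left]
    have hq'eq : q' = q ^^^ 2^e := by rw [← hx2, xor_cancel_left]
    have hrm : bitrev k m' = bitrev k m + 2^(k-1-e) := by
      rw [hm'eq]; exact bitrev_xor he hbm
    have hrq : bitrev k q' = bitrev k q + 2^(k-1-e) := by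
      rw [hq'eq]; exact bitrev_xor he hbq
    rw [min_eq_left (hrm ▸ Nat.le_add_right _ _), max_eq_right (hrm ▸ Nat.le_add_right _ _),
        min_eq_left (hrq ▸ Nat.le_add_right _ _), max_eq_right (hrq ▸ Nat.le_add_right _ _)]
    apply disjoint_box_y
    rw [hrm, hrq]
    have hpow : (2:ℕ)^(k-e) = 2^(k-1-e) * 2 := by
      rw [← pow_succ]; congr 1; omega
    rcases Nat.lt_or_ge (bitrev e (m % 2^e)) (bitrev e (q % 2^e)) with hB' | hB'
    · left
      have h := Nat.mul_le_mul_left (2^(k-e)) (show bitrev e (m % 2^e) + 1 ≤ bitrev e (q % 2^e) by omega)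
      rw [mul_add, mul_one] at h
      omega
    · right
      have hB'' : bitrev e (q % 2^e) < bitrev e (m % 2^e) := by omega
      have h := Nat.mul_le_mul_left (2^(k-e)) (show bitrev e (q % 2^e) + 1 ≤ bitrev e (m % 2^e) by omega)
      rw [mul_add, mul_one] at h
      omega
  · -- different blocks in x: x-disjointness
    have hevm : m / 2^e % 2 = 0 := by
      have h := Nat.testBit_eq_decide_div_mod_eq (x := m) (i := e)
      rw [hbm] at h
      have := of_decide_eq_false h.symm
      omega
    have hevq : q / 2^e % 2 = 0 := by
      have h := Nat.testBit_eq_decide_div_mod_eq (x := q) (i := e)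
      rw [hbq] at h
      have := of_decide_eq_false h.symm
      omega
    apply disjoint_box_x
    rw [hma, hqa]
    rcases Nat.lt_or_ge (m / 2^e) (q / 2^e) with hd | hd
    · left
      have h2' : m / 2^e + 2 ≤ q / 2^e := by omega
      have hmul : 2^e * (m / 2^e) + 2^e * 2 ≤ 2^e * (q / 2^e) := by
        rw [← mul_add]
        exact Nat.mul_le_mul_left _ h2'
      omega
    · right
      have hd' : q / 2^e < m / 2^e := by omega
      have h2' : q / 2^e + 2 ≤ m / 2^e := by omega
      have hmul : 2^e * (q / 2^e) + 2^e * 2 ≤ 2^e * (m / 2^e) := by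
        rw [← mul_add]
        exact Nat.mul_le_mul_left _ h2'
      omega
end
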